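/- Let B be a nonempty compact metric space and let C ⊆ B be a nonempty closed subset that is homeomorphic to the Cantor space {0,1}^ℕ and is a retract of B. Then B does not have the periodic point property; that is, there exists a continuous map g : B → B with no periodic points. -/

import Mathlib

/-- A space has the fixed point property: every continuous self-map has a fixed point. -/
def HasFPP (Y : Type*) [TopologicalSpace Y] : Prop :=
  ∀ f : Y → Y, Continuous f → ∃ x, f x = x

/-- A space has the periodic point property: every continuous self-map has a periodic point. -/
def HasPPP (Y : Type*) [TopologicalSpace Y] : Prop :=
  ∀ f : Y → Y, Continuous f → ∃ x, ∃ n : ℕ, 1 ≤ n ∧ f^[n] x = x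

/-- Local fixed point property: there is an open basis whose members have closures with FPP. -/
def HasLFPP (Y : Type*) [TopologicalSpace Y] : Prop :=
  ∃ 𝓑 : Set (Set Y), TopologicalSpace.IsTopologicalBasis 𝓑 ∧
    ∀ B ∈ 𝓑, HasFPP ↥(closure B)

/-- Weak local fixed point property. -/
def HasWLFPP (Y : Type*) [TopologicalSpace Y] : Prop :=
  ∃ 𝓑 : Set (Set Y), TopologicalSpace.IsTopologicalBasis 𝓑 ∧
    ∀ B ∈ 𝓑, ∀ f : Y → Y, Continuous f → f '' closure B ⊆ B → ∃ x ∈ B, f x = x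

/-- Local periodic point property. -/
def HasLPPP (Y : Type*) [TopologicalSpace Y] : Prop :=
  ∃ 𝓑 : Set (Set Y), TopologicalSpace.IsTopologicalBasis 𝓑 ∧
    ∀ B ∈ 𝓑, HasPPP ↥(closure B)

/-- Weak local periodic point property. -/
def HasWLPPP (Y : Type*) [TopologicalSpace Y] : Prop :=
  ∃ 𝓑 : Set (Set Y), TopologicalSpace.IsTopologicalBasis 𝓑 ∧
    ∀ B ∈ 𝓑, ∀ f : Y → Y, Continuous f → f '' closure B ⊆ B →
      ∃ x ∈ B, ∃ n : ℕ, 1 ≤ n ∧ f^[n] x = x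

/-- A subset is a simple closed curve if it is homeomorphic to the unit circle. -/
def IsSimpleClosedCurve {α : Type*} [TopologicalSpace α] (S : Set α) : Prop :=
  Nonempty (↥S ≃ₜ ↥(Metric.sphere (0 : EuclideanSpace ℝ (Fin 2)) 1))

/-- Covering dimension at most `n`: every finite open cover admits an open shrinking
of order at most `n + 1`. -/
def CoveringDimLE (Y : Type*) [TopologicalSpace Y] (n : ℕ) : Prop :=
  ∀ (ι : Type) [Finite ι] (U : ι → Set Y), (∀ i, IsOpen (U i)) → (⋃ i, U i) = Set.univ →
    ∃ V : ι → Set Y, (∀ i, IsOpen (V i)) ∧ (∀ i, V i ⊆ U i) ∧ (⋃ i, V i) = Set.univ ∧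
      ∀ y : Y, {i | y ∈ V i}.ncard ≤ n + 1

/-- A dendrite: a locally connected (metric) continuum containing no simple closed curve. -/
def IsDendrite {α : Type*} [TopologicalSpace α] (D : Set α) : Prop :=
  IsCompact D ∧ IsConnected D ∧ LocallyConnectedSpace ↥D ∧ ∀ S ⊆ D, ¬ IsSimpleClosedCurve S

/-- A local dendrite: every point has a closed neighborhood which is a dendrite. -/
def IsLocalDendrite (Y : Type*) [TopologicalSpace Y] : Prop :=
  ∀ y : Y, ∃ N : Set Y, N ∈ nhds y ∧ IsClosed N ∧ IsDendrite N

/-- The binary odometer on Cantor space. -/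
def odo (x : ℕ → Bool) : ℕ → Bool :=
  fun n => xor (x n) (decide (∀ k < n, x k = true))

def oval (m : ℕ) (x : ℕ → Bool) : ℕ := ∑ k ∈ Finset.range m, (x k).toNat * 2 ^ k

lemma oval_succ (m : ℕ) (x : ℕ → Bool) :
    oval (m + 1) x = oval m x + (x m).toNat * 2 ^ m := Finset.sum_range_succ _ _

lemma oval_all (m : ℕ) (x : ℕ → Bool) (h : ∀ k < m, x k = true) : oval m x = 2 ^ m - 1 := by
  induction m with
  | zero => simp [oval]
  | succ m ih =>
    have h1 : 0 < 2 ^ m := Nat.pow_pos (n := m) (by norm_num)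
    have h2 : 2 ^ (m + 1) = 2 ^ m * 2 := pow_succ 2 m
    rw [oval_succ, ih (fun k hk => h k (by omega)), h m (by omega)]
    simp
    omega

lemma oval_odo (m : ℕ) (x : ℕ → Bool) :
    oval m (odo x) = if (∀ k < m, x k = true) then 0 else oval m x + 1 := by
  induction m with
  | zero => simp [oval]
  | succ m ih =>
    by_cases h : ∀ k < m, x k = true
    · have hd : decide (∀ k < m, x k = true) = true := decide_eq_true h
      by_cases hm : x m = true
      · have hall : ∀ k < m + 1, x k = true := by
          intro k hk
          rcases Nat.lt_succ_iff_lt_or_eq.mp hk with hk | rfl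
          · exact h k hk
          · exact hm
        rw [if_pos hall, oval_succ, ih, if_pos h]
        have : odo x m = false := by simp [odo, hd, hm]
        simp [this]
      · have hnall : ¬ ∀ k < m + 1, x k = true := fun hc => hm (hc m (by omega))
        rw [if_neg hnall, oval_succ, oval_succ, ih, if_pos h, oval_all m x h]
        have hb : x m = false := by simpa using hm
        have ho : odo x m = true := by simp [odo, hd, hb]
        have h1 : 0 < 2 ^ m := Nat.pow_pos (n := m) (by norm_num)
        rw [ho, hb]
        simp
        omega
    · have hd : decide (∀ k < m, x k = true) = false := decide_eq_false h
      have hnall : ¬ ∀ k < m + 1, x k = true := fun hc => h (fun k hk => hc k (by omega))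
      rw [if_neg hnall, oval_succ, oval_succ, ih, if_neg h]
      have : odo x m = x m := by simp [odo, hd]
      rw [this]
      ring

lemma oval_odo_mod (m : ℕ) (x : ℕ → Bool) :
    oval m (odo x) ≡ oval m x + 1 [MOD 2 ^ m] := by
  rw [oval_odo]
  by_cases h : ∀ k < m, x k = true
  · rw [if_pos h, oval_all m x h]
    have h1 : 0 < 2 ^ m := Nat.pow_pos (n := m) (by norm_num)
    have : 2 ^ m - 1 + 1 = 2 ^ m := by omega
    rw [this]
    exact (Nat.modEq_zero_iff_dvd.mpr dvd_rfl).symm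
  · rw [if_neg h]

lemma oval_iter (m n : ℕ) (x : ℕ → Bool) :
    oval m (odo^[n] x) ≡ oval m x + n [MOD 2 ^ m] := by
  induction n with
  | zero => simpa using Nat.ModEq.refl _
  | succ n ih =>
    rw [Function.iterate_succ_apply']
    calc oval m (odo (odo^[n] x)) ≡ oval m (odo^[n] x) + 1 [MOD 2 ^ m] := oval_odo_mod m _
      _ ≡ (oval m x + n) + 1 [MOD 2 ^ m] := ih.add_right 1
      _ = oval m x + (n + 1) := by ring

lemma odo_no_periodic (x : ℕ → Bool) (n : ℕ) (hn : 1 ≤ n) : odo^[n] x ≠ x := by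
  intro hx
  have h := oval_iter n n x
  rw [hx] at h
  have h' : oval n x + n ≡ oval n x + 0 [MOD 2 ^ n] := by simpa using h.symm
  have h2 : (2 : ℕ) ^ n ∣ n := (Nat.modEq_zero_iff_dvd).mp (Nat.ModEq.add_left_cancel' _ h')
  have h3 : 2 ^ n ≤ n := Nat.le_of_dvd (by omega) h2
  have h4 : n < 2 ^ n := Nat.lt_two_pow_self
  omega

lemma odo_continuous : Continuous odo := by
  apply continuous_pi
  intro n
  have heq : (fun x => odo x n) =
      (fun y : Fin (n + 1) → Bool =>
        xor (y (Fin.last n)) (decide (∀ k : Fin n, y k.castSucc = true))) ∘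
      (fun x (i : Fin (n + 1)) => x i.val) := by
    funext x
    simp only [Function.comp_apply, odo, Fin.val_last]
    congr 1
    apply decide_eq_decide.mpr
    constructor
    · intro h k
      simpa using h k.val k.isLt
    · intro h k hk
      simpa using h ⟨k, hk⟩
  rw [heq]
  exact (continuous_of_discreteTopology).comp (continuous_pi fun i => continuous_apply i.val)

/-- A nonempty compact metric space retracting onto a closed copy of the Cantor set does not
have the periodic point property. -/

theorem stmt_16 {B : Type*} [MetricSpace B] [CompactSpace B] [Nonempty B]
    (C : Set B) (hCne : C.Nonempty) (hCcl : IsClosed C)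
    (hCantor : Nonempty (↥C ≃ₜ (ℕ → Bool)))
    (r : B → B) (hr : Continuous r) (hrC : ∀ x, r x ∈ C) (hretr : ∀ c ∈ C, r c = c) :
    ¬ HasPPP B ∧ ∃ g : B → B, Continuous g ∧ ∀ (x : B) (n : ℕ), 1 ≤ n → g^[n] x ≠ x := by
  obtain ⟨e⟩ := hCantor
  -- the conjugated odometer on C
  set h : C → C := fun p => e.symm (odo (e p)) with hh
  set g : B → B := fun x => (e.symm (odo (e ⟨r x, hrC x⟩)) : C) with hg
  have hgC : ∀ x, g x ∈ C := fun x => (e.symm (odo (e ⟨r x, hrC x⟩))).2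
  have hgc : Continuous g := by
    apply continuous_subtype_val.comp
    exact e.continuous_invFun.comp (odo_continuous.comp
      (e.continuous_toFun.comp (hr.subtype_mk hrC)))
  have hgcoe : ∀ c : C, g ↑c = ↑(h c) := by
    intro c
    have : (⟨r ↑c, hrC ↑c⟩ : C) = c := Subtype.ext (hretr c c.2)
    simp [hg, hh, this]
  have hiter : ∀ (n : ℕ) (c : C), g^[n] ↑c = ↑(h^[n] c) := by
    intro n
    induction n with
    | zero => intro c; simp
    | succ n ih =>
      intro c
      rw [Function.iterate_succ_apply', Function.iterate_succ_apply', ih, hgcoe]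
  have hconj : ∀ (n : ℕ) (c : C), e (h^[n] c) = odo^[n] (e c) := by
    intro n
    induction n with
    | zero => intro c; simp
    | succ n ih =>
      intro c
      rw [Function.iterate_succ_apply', Function.iterate_succ_apply', hh]
      simp [ih]
      exact congrArg odo (ih c)
  have hnoper : ∀ (x : B) (n : ℕ), 1 ≤ n → g^[n] x ≠ x := by
    intro x n hn hx
    have hxC : x ∈ C := by
      obtain ⟨m, rfl⟩ : ∃ m, n = m + 1 := ⟨n - 1, by omega⟩
      rw [← hx, Function.iterate_succ_apply']
      exact hgC _
    set c : C := ⟨x, hxC⟩ with hc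
    have : (↑(h^[n] c) : B) = ↑c := by rw [← hiter]; exact hx
    have hcc : h^[n] c = c := Subtype.ext this
    have : odo^[n] (e c) = e c := by rw [← hconj, hcc]
    exact odo_no_periodic (e c) n hn this
  refine ⟨fun hp => ?_, g, hgc, hnoper⟩
  obtain ⟨x, n, hn, hfix⟩ := hp g hgc
  exact hnoper x n hn hfix
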